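/- Let b ≥ 2, ℓ ≥ 1, m = b^{ℓ+1}, and let p, p' > m both be coprime to b with p ≡ p' (mod m). Then C_p(b^ℓ mod p) - ⌊(p-1)/b⌋ = C_{p'}(b^ℓ mod p') - ⌊(p'-1)/b⌋, where C_p(g) = #{r ∈ {1,...,p-1} : ⌊b·r/p⌋ = ⌊b·(g·r mod p)/p⌋}. -/

import Mathlib

lemma ce_le_iff {m x r : ℕ} (hm : 0 < m) : (x + m - 1) / m ≤ r ↔ x ≤ m * r := by
  rw [Nat.div_le_iff_le_mul_add_pred hm]; set K := m * r; omega

lemma lt_ce_iff {m y r : ℕ} (hm : 0 < m) : r < (y + m - 1) / m ↔ m * r < y := by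
  rw [Nat.lt_iff_add_one_le, Nat.le_div_iff_mul_le hm]
  have h : (r + 1) * m = m * r + m := by ring
  rw [h]; set K := m * r; omega

lemma m_mul_ce {m x : ℕ} (hm : 0 < m) : m * ((x + m - 1) / m) = x + (m - x % m) % m := by
  obtain ⟨q, s, hx, hs⟩ : ∃ q s, x = m * q + s ∧ s < m :=
    ⟨x / m, x % m, (Nat.div_add_mod x m).symm, Nat.mod_lt _ hm⟩
  have hxm : x % m = s := by rw [hx]; simp [Nat.mul_add_mod, Nat.mod_eq_of_lt hs]
  rcases Nat.eq_zero_or_pos s with h0 | h0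
  · subst h0
    rw [hxm, hx]
    have h : (m * q + 0 + m - 1) = m * q + (m - 1) := by omega
    rw [h, Nat.mul_add_div hm, Nat.div_eq_of_lt (by omega)]
    simp
  · rw [hxm, hx]
    have h : (m * q + s + m - 1) = m * q + (s + m - 1) := by omega
    rw [h, Nat.mul_add_div hm]
    have h1 : (s + m - 1) / m = 1 := Nat.div_eq_of_lt_le (by omega) (by omega)
    rw [h1, Nat.mod_eq_of_lt (by omega)]
    ring_nf
    omega

lemma cond_iff (b ℓ p r : ℕ) (hb : 0 < b) (hp : 0 < p) :
    (b * r / p = b * (b ^ ℓ % p * r % p) / p) ↔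
    ((b ^ (ℓ+1) * r / p) / b ^ ℓ = (b ^ (ℓ+1) * r / p) % b) := by
  have hbl : 0 < b ^ ℓ := Nat.pow_pos hb
  have h1 : b ^ ℓ % p * r % p = b ^ ℓ * r % p := Nat.mod_mul_mod _ _ _
  have h2 : b * r / p = (b ^ (ℓ+1) * r / p) / b ^ ℓ := by
    rw [Nat.div_div_eq_div_mul, show b ^ (ℓ+1) * r = b * r * b ^ ℓ by ring,
      Nat.mul_div_mul_right _ _ hbl]
  have h3 : b * (b ^ ℓ * r % p) / p = (b ^ (ℓ+1) * r / p) % b := by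
    set A := b ^ ℓ * r with hA
    obtain ⟨q, s, hqs, hs⟩ : ∃ q s, A = p * q + s ∧ s < p :=
      ⟨A / p, A % p, (Nat.div_add_mod A p).symm, Nat.mod_lt _ hp⟩
    have hmod : A % p = s := by rw [hqs]; simp [Nat.mul_add_mod, Nat.mod_eq_of_lt hs]
    have hbA : b ^ (ℓ+1) * r = b * A := by rw [hA]; ring
    have hdiv : b ^ (ℓ+1) * r / p = b * q + b * s / p := by
      rw [hbA, hqs, show b * (p * q + s) = p * (b * q) + b * s by ring, Nat.mul_add_div hp]
    have hlt : b * s / p < b := (Nat.div_lt_iff_lt_mul hp).2 (Nat.mul_lt_mul_of_le_of_lt (le_refl b) hs hb)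
    have hm2 : (b * q + b * s / p) % b = b * s / p := by
      rw [Nat.add_comm, Nat.add_mul_mod_self_left, Nat.mod_eq_of_lt hlt]
    rw [hmod, hdiv, hm2]
  rw [h1, h2, h3]

lemma fiber_eq (m p t : ℕ) (hm : 0 < m) (hmp : m < p) (ht : t < m) :
    (Finset.Icc 1 (p-1)).filter (fun r => m * r / p = t)
    = Finset.Ico (max ((t * p + m - 1) / m) 1) (((t+1) * p + m - 1) / m) := by
  have hp : 0 < p := lt_trans hm hmp
  ext r
  simp only [Finset.mem_filter, Finset.mem_Icc, Finset.mem_Ico, max_le_iff]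
  have hA : m * r / p = t ↔ t * p ≤ m * r ∧ m * r < (t+1) * p := by
    constructor
    · intro h
      exact ⟨(Nat.le_div_iff_mul_le hp).1 h.ge, (Nat.div_lt_iff_lt_mul hp).1 (by omega)⟩
    · rintro ⟨h1, h2⟩
      have := (Nat.le_div_iff_mul_le hp).2 h1
      have := (Nat.div_lt_iff_lt_mul hp).2 h2
      omega
  rw [hA, ce_le_iff hm, lt_ce_iff hm]
  have hub : m * r < (t+1) * p → r ≤ p - 1 := by
    intro h
    have h2 : (t+1) * p ≤ m * p := Nat.mul_le_mul_right p (by omega)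
    have h3 : r < p := Nat.lt_of_mul_lt_mul_left (a := m) (by omega)
    omega
  constructor
  · rintro ⟨⟨h1, h2⟩, h3, h4⟩; exact ⟨⟨h3, h1⟩, h4⟩
  · rintro ⟨⟨h1, h2⟩, h3⟩; exact ⟨⟨h2, hub h3⟩, h1, h3⟩

lemma Tcard (b ℓ : ℕ) (hb : 2 ≤ b) (hℓ : 1 ≤ ℓ) :
    ((Finset.range (b ^ (ℓ+1))).filter (fun t => t / b ^ ℓ = t % b)).card = b ^ ℓ := by
  have hb0 : 0 < b := by omega
  have hbl : 0 < b ^ ℓ := Nat.pow_pos hb0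
  have hdvd : b ∣ b ^ ℓ := dvd_pow_self b (by omega)
  have key : ((Finset.range (b ^ (ℓ+1))).filter (fun t => t / b ^ ℓ = t % b)).card
      = (Finset.range (b ^ ℓ)).card := by
    apply Finset.card_bij' (i := fun t _ => t % b ^ ℓ) (j := fun s _ => s % b * b ^ ℓ + s)
    · intro t ht
      exact Finset.mem_range.2 (Nat.mod_lt _ hbl)
    · intro s hs
      simp only [Finset.mem_range] at hs
      have h1 : s % b < b := Nat.mod_lt _ hb0
      refine Finset.mem_filter.2 ⟨Finset.mem_range.2 ?_, ?_⟩
      · have h2 : s % b * b ^ ℓ ≤ (b - 1) * b ^ ℓ := Nat.mul_le_mul_right _ (by omega)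
        have h3 : (b - 1) * b ^ ℓ + b ^ ℓ = b * b ^ ℓ := by
          have hb1 : b - 1 + 1 = b := by omega
          calc (b - 1) * b ^ ℓ + b ^ ℓ = (b - 1 + 1) * b ^ ℓ := by ring
            _ = b * b ^ ℓ := by rw [hb1]
        have h4 : b * b ^ ℓ = b ^ (ℓ + 1) := by ring
        omega
      · have hq : (s % b * b ^ ℓ + s) / b ^ ℓ = s % b := by
          rw [Nat.add_comm, Nat.add_mul_div_right _ _ hbl, Nat.div_eq_of_lt hs]; omega
        have hr : (s % b * b ^ ℓ + s) % b = s % b := by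
          obtain ⟨c, hc⟩ := hdvd
          rw [hc, show s % b * (b * c) + s = s + b * (s % b * c) by ring,
            Nat.add_mul_mod_self_left]
        rw [hq, hr]
    · intro t ht
      obtain ⟨-, hcond⟩ := Finset.mem_filter.1 ht
      have h1 : t % b ^ ℓ % b = t % b := Nat.mod_mod_of_dvd t hdvd
      rw [h1, ← hcond, Nat.div_add_mod']
    · intro s hs
      simp only [Finset.mem_range] at hs
      rw [Nat.add_comm, Nat.add_mul_mod_self_right, Nat.mod_eq_of_lt hs]
  rw [key, Finset.card_range]

lemma key (b ℓ p : ℕ) (hb : 2 ≤ b) (hℓ : 1 ≤ ℓ) (hp : b ^ (ℓ+1) < p) :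
    (b ^ (ℓ+1) : ℤ) * (((Finset.Icc 1 (p-1)).filter
        (fun r => b * r / p = b * (b ^ ℓ % p * r % p) / p)).card : ℤ)
    = (b : ℤ) ^ ℓ * p
      + (∑ t ∈ (Finset.range (b ^ (ℓ+1))).filter (fun t => t / b ^ ℓ = t % b),
          ((((b ^ (ℓ+1) - (t+1) * (p % b ^ (ℓ+1)) % b ^ (ℓ+1)) % b ^ (ℓ+1) : ℕ) : ℤ)
          - (((b ^ (ℓ+1) - t * (p % b ^ (ℓ+1)) % b ^ (ℓ+1)) % b ^ (ℓ+1) : ℕ) : ℤ)))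
      - (b : ℤ) ^ (ℓ+1) := by
  have hb0 : 0 < b := by omega
  set m := b ^ (ℓ+1) with hm_def
  have hm : 0 < m := Nat.pow_pos hb0
  have hp0 : 0 < p := lt_trans hm hp
  set T := (Finset.range m).filter (fun t => t / b ^ ℓ = t % b) with hT_def
  set ρ := p % m with hρ_def
  have hρm : ρ % m = ρ := Nat.mod_mod_of_dvd p dvd_rfl
  set ε : ℕ → ℕ := fun x => (m - x * ρ % m) % m with hε_def
  set CE : ℕ → ℕ := fun x => (x * p + m - 1) / m with hCE_def
  -- step 1: rewrite the filter condition
  have step1 : (Finset.Icc 1 (p-1)).filter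
      (fun r => b * r / p = b * (b ^ ℓ % p * r % p) / p)
      = (Finset.Icc 1 (p-1)).filter (fun r => (m * r / p) / b ^ ℓ = (m * r / p) % b) := by
    apply Finset.filter_congr
    intro r _
    exact cond_iff b ℓ p r hb0 hp0
  rw [step1]
  set S := (Finset.Icc 1 (p-1)).filter (fun r => (m * r / p) / b ^ ℓ = (m * r / p) % b)
    with hS_def
  -- step 2: fiberwise count
  have step2 : S.card = ∑ t ∈ T, (S.filter (fun r => m * r / p = t)).card := by
    apply Finset.card_eq_sum_card_fiberwise
    intro r hr
    obtain ⟨hrI, hrP⟩ := Finset.mem_filter.1 hr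
    obtain ⟨hr1, hr2⟩ := Finset.mem_Icc.1 hrI
    refine Finset.mem_filter.2 ⟨Finset.mem_range.2 ?_, hrP⟩
    have hlt : m * r < m * p :=
      Nat.mul_lt_mul_of_le_of_lt (le_refl m) (by omega) hm
    exact (Nat.div_lt_iff_lt_mul hp0).2 hlt
  -- step 3: compute each fiber
  have step3 : ∀ t ∈ T, (S.filter (fun r => m * r / p = t)).card
      = CE (t+1) - max (CE t) 1 := by
    intro t ht
    obtain ⟨htr, htc⟩ := Finset.mem_filter.1 ht
    have hff : S.filter (fun r => m * r / p = t)
        = (Finset.Icc 1 (p-1)).filter (fun r => m * r / p = t) := by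
      rw [hS_def, Finset.filter_filter]
      apply Finset.filter_congr
      intro r _
      constructor
      · exact fun h => h.2
      · intro h
        exact ⟨by rw [h]; exact htc, h⟩
    rw [hff, fiber_eq m p t hm hp (Finset.mem_range.1 htr), Nat.card_Ico]
  -- basic facts about CE
  have hmono : ∀ t : ℕ, CE t ≤ CE (t+1) := by
    intro t
    apply Nat.div_le_div_right
    have h1 : t * p ≤ (t+1) * p := Nat.mul_le_mul_right p (by omega)
    omega
  have hpos : ∀ t : ℕ, 1 ≤ CE (t+1) := by
    intro t
    have := (lt_ce_iff (m := m) (y := (t+1) * p) (r := 0) hm).2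
      (by positivity)
    exact this
  have hmax : ∀ t : ℕ, max (CE t) 1 = CE t + if t = 0 then 1 else 0 := by
    intro t
    rcases t with _ | n
    · have h0 : CE 0 = 0 := by
        simp only [hCE_def, Nat.zero_mul, Nat.zero_add]
        exact Nat.div_eq_of_lt (by omega)
      rw [h0]; simp
    · rw [max_eq_left (hpos n), if_neg (by omega)]
      omega
  have hce : ∀ x : ℕ, m * CE x = x * p + ε x := by
    intro x
    have hx : x * p % m = x * ρ % m := by
      rw [Nat.mul_mod x p m, Nat.mul_mod x ρ m, hρ_def, hρm]
      try rw [hρ_def]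
    simp only [hCE_def, hε_def]
    rw [m_mul_ce hm, hx]
  -- cast the count to ℤ
  have hCsum : (S.card : ℤ) = ∑ t ∈ T, ((CE (t+1) : ℤ) - ((max (CE t) 1 : ℕ) : ℤ)) := by
    rw [step2, Finset.sum_congr rfl step3, Nat.cast_sum]
    apply Finset.sum_congr rfl
    intro t _
    rw [Nat.cast_sub (max_le (hmono t) (hpos t))]
  -- per-term identity
  have hterm : ∀ t ∈ T, (m : ℤ) * (CE (t+1) : ℤ) - m * ((max (CE t) 1 : ℕ) : ℤ)
      = (p : ℤ) + ((ε (t+1) : ℤ) - (ε t : ℤ)) - m * (if t = 0 then 1 else 0) := by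
    intro t _
    have e1 : (m : ℤ) * (CE (t+1) : ℤ) = ((t : ℤ) + 1) * p + (ε (t+1) : ℤ) := by
      have := hce (t+1)
      have : ((m * CE (t+1) : ℕ) : ℤ) = (((t+1) * p + ε (t+1) : ℕ) : ℤ) := by rw [this]
      push_cast at this
      linarith
    have e2 : ((max (CE t) 1 : ℕ) : ℤ) = (CE t : ℤ) + (if t = 0 then 1 else 0) := by
      rw [hmax t]
      push_cast [apply_ite (Nat.cast : ℕ → ℤ)]
      ring
    have e3 : (m : ℤ) * (CE t : ℤ) = (t : ℤ) * p + (ε t : ℤ) := by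
      have := hce t
      have : ((m * CE t : ℕ) : ℤ) = ((t * p + ε t : ℕ) : ℤ) := by rw [this]
      push_cast at this
      linarith
    rw [e1, e2]
    ring_nf
    ring_nf at e3
    linarith
  -- sum it up
  have hzeroT : (0 : ℕ) ∈ T := by
    refine Finset.mem_filter.2 ⟨Finset.mem_range.2 hm, ?_⟩
    simp
  have hmain : (m : ℤ) * (S.card : ℤ)
      = (b : ℤ) ^ ℓ * p + (∑ t ∈ T, ((ε (t+1) : ℤ) - (ε t : ℤ))) - m := by
    rw [hCsum, Finset.mul_sum]
    have : ∑ t ∈ T, (m : ℤ) * ((CE (t+1) : ℤ) - ((max (CE t) 1 : ℕ) : ℤ))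
        = ∑ t ∈ T, ((p : ℤ) + ((ε (t+1) : ℤ) - (ε t : ℤ)) - m * (if t = 0 then 1 else 0)) := by
      apply Finset.sum_congr rfl
      intro t ht
      rw [mul_sub]
      exact hterm t ht
    rw [this, Finset.sum_sub_distrib, Finset.sum_add_distrib, ← Finset.mul_sum,
      Finset.sum_ite_eq' T 0 (fun _ => (1 : ℤ)), if_pos hzeroT, Finset.sum_const,
      nsmul_eq_mul]
    have hTc : T.card = b ^ ℓ := by
      rw [hT_def, hm_def]
      exact Tcard b ℓ hb hℓ
    rw [hTc]
    push_cast
    ring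
  -- finish
  have hcast : ((m : ℕ) : ℤ) = (b : ℤ) ^ (ℓ+1) := by
    rw [hm_def]; push_cast; ring
  rw [← hcast]
  simp only [hε_def] at hmain
  exact hmain

lemma floordiv (b p : ℕ) (hb : 2 ≤ b) (h1 : 1 < p) (hnd : p % b ≠ 0) :
    (b : ℤ) * (((p-1)/b : ℕ) : ℤ) = (p : ℤ) - ((p % b : ℕ) : ℤ) := by
  have hb0 : 0 < b := by omega
  obtain ⟨q, s, hqs, hs1, hs2⟩ : ∃ q s, p = b * q + s ∧ 1 ≤ s ∧ s < b := by
    refine ⟨p / b, p % b, (Nat.div_add_mod p b).symm, ?_, Nat.mod_lt _ hb0⟩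
    omega
  have hmod : p % b = s := by rw [hqs]; simp [Nat.mul_add_mod, Nat.mod_eq_of_lt hs2]
  have hq : (p - 1) / b = q := by
    have h2 : p - 1 = b * q + (s - 1) := by omega
    rw [h2, Nat.mul_add_div hb0, Nat.div_eq_of_lt (by omega)]
    omega
  rw [hq, hmod]
  have : (p : ℤ) = (b : ℤ) * q + s := by exact_mod_cast congrArg (Nat.cast : ℕ → ℤ) hqs
  linarith

theorem finite_determination (b ℓ p p' : ℕ) (hb : 2 ≤ b) (hℓ : 1 ≤ ℓ)
    (hp : b ^ (ℓ + 1) < p) (hp' : b ^ (ℓ + 1) < p')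
    (hcop : Nat.gcd p b = 1) (hcop' : Nat.gcd p' b = 1)
    (hcong : p % b ^ (ℓ + 1) = p' % b ^ (ℓ + 1)) :
    ((((Finset.Icc 1 (p - 1)).filter
        (fun r => b * r / p = b * (b ^ ℓ % p * r % p) / p)).card : ℤ)
      - ((p - 1) / b : ℕ)) =
    ((((Finset.Icc 1 (p' - 1)).filter
        (fun r => b * r / p' = b * (b ^ ℓ % p' * r % p') / p')).card : ℤ)
      - ((p' - 1) / b : ℕ)) := by
  have hb0 : 0 < b := by omega
  have hm : 0 < b ^ (ℓ+1) := Nat.pow_pos hb0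
  have hm1 : 1 < b ^ (ℓ+1) := Nat.one_lt_pow (by omega) (by omega)
  have hdvd : b ∣ b ^ (ℓ+1) := dvd_pow_self b (by omega)
  have hk := key b ℓ p hb hℓ hp
  have hk' := key b ℓ p' hb hℓ hp'
  rw [hcong] at hk
  have hpb : p % b ≠ 0 := by
    intro h
    have hd : b ∣ p := Nat.dvd_of_mod_eq_zero h
    have h2 : b ∣ Nat.gcd p b := Nat.dvd_gcd hd dvd_rfl
    rw [hcop] at h2
    have := Nat.le_of_dvd one_pos h2
    omega
  have hpb' : p' % b ≠ 0 := by
    intro h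
    have hd : b ∣ p' := Nat.dvd_of_mod_eq_zero h
    have h2 : b ∣ Nat.gcd p' b := Nat.dvd_gcd hd dvd_rfl
    rw [hcop'] at h2
    have := Nat.le_of_dvd one_pos h2
    omega
  have fd := floordiv b p hb (by omega) hpb
  have fd' := floordiv b p' hb (by omega) hpb'
  have hmb : p % b = p' % b ^ (ℓ+1) % b := by
    rw [← hcong, Nat.mod_mod_of_dvd p hdvd]
  have hmb' : p' % b = p' % b ^ (ℓ+1) % b := by
    rw [Nat.mod_mod_of_dvd p' hdvd]
  rw [hmb] at fd
  rw [hmb'] at fd'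
  have hbne : ((b : ℤ) ^ (ℓ+1)) ≠ 0 := by positivity
  apply mul_left_cancel₀ hbne
  linear_combination hk - hk' - (b : ℤ) ^ ℓ * fd + (b : ℤ) ^ ℓ * fd'
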